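/- arXiv:2305.10131 — 2 statements merged into one kernel-verified Lean document; each statement's English description precedes it below -/
import Mathlib

section
/- Exact penalty: let K be a nonempty bounded polyhedral set in ℝ^n, f a concave function bounded below on K, and p a nonnegative concave function on K vanishing exactly on a set S ⊆ K containing all vertices of K at which p vanishes; assume the minimum of f over {z ∈ K : p(z) ≤ 0} is attained. If additionally p(z) = 0 on K iff z is a vertex-type (binary) point and K's vertices are contained in {z : p(z)=0}, then there exists t̄ ≥ 0 such that for all t ≥ t̄, the problems min{f(z) : z ∈ K, p(z) ≤ 0} and min{f(z) + t·p(z) : z ∈ K} have the same optimal value and the same solution set. -/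
/-- Exact penalty theorem for concave programming: let K be a nonempty bounded polyhedron
(a polytope), f concave and bounded below on K, p concave and nonnegative on K with the
vertices (extreme points) of K contained in {p = 0}, p vanishing on K exactly at the
vertex-type (binary) points, and assume min{f(z) : z ∈ K, p(z) ≤ 0} is attained. Then
there is t̄ ≥ 0 such that for every t ≥ t̄ the constrained problem
min{f(z) : z ∈ K, p(z) ≤ 0} and the penalized problem min{f(z) + t·p(z) : z ∈ K}
have the same optimal value and the same solution set. -/
theorem exact_penalty_concave
    (n : ℕ) (K : Set (Fin n → ℝ)) (hKne : K.Nonempty)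
    (hKpoly : ∃ S : Finset (Fin n → ℝ), K = convexHull ℝ (S : Set (Fin n → ℝ)))
    (hKbdd : Bornology.IsBounded K)
    (f p : (Fin n → ℝ) → ℝ)
    (hf : ConcaveOn ℝ K f) (hfbdd : BddBelow (f '' K))
    (hp : ConcaveOn ℝ K p) (hpnn : ∀ z ∈ K, 0 ≤ p z)
    (hvert : Set.extremePoints ℝ K ⊆ {z | p z = 0})
    (hzero : ∀ z ∈ K, (p z = 0 ↔ z ∈ Set.extremePoints ℝ K))
    (hattain : ∃ z ∈ K, p z ≤ 0 ∧ ∀ w ∈ K, p w ≤ 0 → f z ≤ f w) :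
    ∃ tbar : ℝ, 0 ≤ tbar ∧ ∀ t : ℝ, tbar ≤ t →
      (sInf {r | ∃ z ∈ K, p z ≤ 0 ∧ r = f z}
          = sInf {r | ∃ z ∈ K, r = f z + t * p z}) ∧
      ({z | z ∈ K ∧ p z ≤ 0 ∧ ∀ w ∈ K, p w ≤ 0 → f z ≤ f w}
          = {z | z ∈ K ∧ ∀ w ∈ K, f z + t * p z ≤ f w + t * p w}) := by
  obtain ⟨S, hS⟩ := hKpoly
  obtain ⟨m, hm⟩ := hfbdd
  have hmK : ∀ z ∈ K, m ≤ f z := fun z hz => hm ⟨z, hz, rfl⟩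
  obtain ⟨zs, hzsK, hzsp, hzsmin⟩ := hattain
  have hSK : ∀ y ∈ S, y ∈ K := fun y hy => hS ▸ subset_convexHull ℝ _ hy
  have hpzs : p zs = 0 := le_antisymm hzsp (hpnn _ hzsK)
  set c := f zs - m + 1 with hc
  have hc0 : 0 < c := by have := hmK zs hzsK; simp only [hc]; linarith
  set tbar := max 1 (∑ s ∈ S, if 0 < p s then c / p s else 0) with htbar
  have hterm : ∀ s ∈ S, 0 ≤ (if 0 < p s then c / p s else 0) := by
    intro s _
    split_ifs with h
    · positivity
    · exact le_rfl
  have htbar1 : (1:ℝ) ≤ tbar := le_max_left _ _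
  -- key inequality on vertices of S with positive penalty
  have htkey : ∀ t, tbar ≤ t → ∀ s ∈ S, 0 < p s → f zs + 1 ≤ f s + t * p s := by
    intro t ht s hsS hps
    have h1 : c / p s ≤ t := by
      calc c / p s = (if 0 < p s then c / p s else 0) := by rw [if_pos hps]
        _ ≤ ∑ s ∈ S, if 0 < p s then c / p s else 0 :=
            Finset.single_le_sum hterm hsS
        _ ≤ tbar := le_max_right _ _
        _ ≤ t := ht
    have h2 : c ≤ t * p s := by
      rw [div_le_iff₀ hps] at h1; linarith [mul_comm t (p s)]
    have h3 : m ≤ f s := hmK s (hSK s hsS)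
    simp only [hc] at h2; linarith
  -- every point of S satisfies the penalized bound
  have hSkey : ∀ t, tbar ≤ t → ∀ s ∈ S, f zs ≤ f s + t * p s := by
    intro t ht s hsS
    rcases (hpnn s (hSK s hsS)).lt_or_eq with h | h
    · linarith [htkey t ht s hsS h]
    · have := hzsmin s (hSK s hsS) (le_of_eq h.symm)
      rw [← h]; linarith
  -- decomposition of points of K
  have hdecomp : ∀ w ∈ K, ∃ wt : (Fin n → ℝ) → ℝ,
      (∀ y ∈ S, 0 ≤ wt y) ∧ ∑ y ∈ S, wt y = 1 ∧ ∑ y ∈ S, wt y • y = w := by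
    intro w hw
    rw [hS, Finset.convexHull_eq] at hw
    obtain ⟨wt, h0, h1, h2⟩ := hw
    exact ⟨wt, h0, h1, by rw [Finset.centerMass_eq_of_sum_1 _ id h1] at h2; simpa using h2⟩
  -- lower bound for the penalized objective over K
  have hB : ∀ t, tbar ≤ t → ∀ w ∈ K, f zs ≤ f w + t * p w := by
    intro t ht w hw
    have ht0 : (0:ℝ) ≤ t := le_trans (by linarith) ht
    obtain ⟨wt, hw0, hw1, hwz⟩ := hdecomp w hw
    have hfJ : ∑ y ∈ S, wt y • f y ≤ f w := by
      rw [← hwz]; exact hf.le_map_sum hw0 hw1 hSK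
    have hpJ : ∑ y ∈ S, wt y • p y ≤ p w := by
      rw [← hwz]; exact hp.le_map_sum hw0 hw1 hSK
    have hsum : f zs ≤ ∑ y ∈ S, wt y • (f y + t * p y) := by
      calc f zs = ∑ y ∈ S, wt y • f zs := by
            rw [← Finset.sum_smul, hw1, one_smul]
        _ ≤ ∑ y ∈ S, wt y • (f y + t * p y) := by
            apply Finset.sum_le_sum
            intro y hy
            exact smul_le_smul_of_nonneg_left (hSkey t ht y hy) (hw0 y hy)
    have hsplit : ∑ y ∈ S, wt y • (f y + t * p y)
        = (∑ y ∈ S, wt y • f y) + t * ∑ y ∈ S, wt y • p y := by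
      rw [Finset.mul_sum, ← Finset.sum_add_distrib]
      apply Finset.sum_congr rfl
      intro y _; simp [smul_eq_mul]; ring
    nlinarith [mul_le_mul_of_nonneg_left hpJ ht0]
  refine ⟨tbar, by linarith, fun t ht => ?_⟩
  have ht1 : (1:ℝ) ≤ t := le_trans htbar1 ht
  have ht0 : (0:ℝ) ≤ t := by linarith
  constructor
  · -- equality of optimal values: both equal f zs
    have lbA : ∀ r ∈ {r | ∃ z ∈ K, p z ≤ 0 ∧ r = f z}, f zs ≤ r := by
      rintro r ⟨z, hz, hpz, rfl⟩; exact hzsmin z hz hpz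
    have memA : f zs ∈ {r | ∃ z ∈ K, p z ≤ 0 ∧ r = f z} := ⟨zs, hzsK, hzsp, rfl⟩
    have lbB : ∀ r ∈ {r | ∃ z ∈ K, r = f z + t * p z}, f zs ≤ r := by
      rintro r ⟨z, hz, rfl⟩; exact hB t ht z hz
    have memB : f zs ∈ {r | ∃ z ∈ K, r = f z + t * p z} :=
      ⟨zs, hzsK, by rw [hpzs]; ring⟩
    have e1 : sInf {r | ∃ z ∈ K, p z ≤ 0 ∧ r = f z} = f zs :=
      le_antisymm (csInf_le ⟨f zs, lbA⟩ memA) (le_csInf ⟨f zs, memA⟩ lbA)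
    have e2 : sInf {r | ∃ z ∈ K, r = f z + t * p z} = f zs :=
      le_antisymm (csInf_le ⟨f zs, lbB⟩ memB) (le_csInf ⟨f zs, memB⟩ lbB)
    rw [e1, e2]
  · ext z
    simp only [Set.mem_setOf_eq]
    constructor
    · rintro ⟨hzK, hpz, hzmin⟩
      have hpz0 : p z = 0 := le_antisymm hpz (hpnn z hzK)
      refine ⟨hzK, fun w hw => ?_⟩
      have h1 : f z ≤ f zs := hzmin zs hzsK hzsp
      have h2 : f zs ≤ f w + t * p w := hB t ht w hw
      rw [hpz0]; linarith
    · rintro ⟨hzK, hzmin⟩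
      -- z minimizes the penalized objective; show it solves the constrained problem
      have hgz : f z + t * p z ≤ f zs := by
        have := hzmin zs hzsK
        rw [hpzs] at this; linarith
      obtain ⟨wt, hw0, hw1, hwz⟩ := hdecomp z hzK
      have hfJ : ∑ y ∈ S, wt y • f y ≤ f z := by
        rw [← hwz]; exact hf.le_map_sum hw0 hw1 hSK
      have hpJ : ∑ y ∈ S, wt y • p y ≤ p z := by
        rw [← hwz]; exact hp.le_map_sum hw0 hw1 hSK
      -- each y in S with positive weight satisfies f y + t p y = f zs and p y = 0
      have hsum0 : ∑ y ∈ S, wt y * (f y + t * p y - f zs) ≤ 0 := by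
        have hsplit : ∑ y ∈ S, wt y * (f y + t * p y - f zs)
            = (∑ y ∈ S, wt y • f y) + t * (∑ y ∈ S, wt y • p y)
              - (∑ y ∈ S, wt y) * f zs := by
          rw [Finset.mul_sum, Finset.sum_mul, ← Finset.sum_add_distrib,
            ← Finset.sum_sub_distrib]
          exact Finset.sum_congr rfl fun y _ => by simp only [smul_eq_mul]; ring
        rw [hsplit, hw1, one_mul]
        nlinarith [mul_le_mul_of_nonneg_left hpJ ht0]
      have hnn : ∀ y ∈ S, 0 ≤ wt y * (f y + t * p y - f zs) := by
        intro y hy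
        have := hSkey t ht y hy
        exact mul_nonneg (hw0 y hy) (by linarith)
      have hall0 : ∀ y ∈ S, wt y * (f y + t * p y - f zs) = 0 := by
        intro y hy
        have h := Finset.sum_nonneg hnn
        have := (Finset.sum_eq_zero_iff_of_nonneg hnn).mp (le_antisymm hsum0 h)
        exact this y hy
      have hpos : ∀ y ∈ S, 0 < wt y → p y = 0 ∧ f y = f zs := by
        intro y hy hwy
        have h0 := hall0 y hy
        have heq : f y + t * p y = f zs := by
          rcases mul_eq_zero.mp h0 with h | h
          · exact absurd h (ne_of_gt hwy)
          · linarith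
        rcases (hpnn y (hSK y hy)).lt_or_eq with h | h
        · exfalso; have := htkey t ht y hy h; linarith
        · refine ⟨h.symm, ?_⟩; rw [← h] at heq; linarith
      -- deduce f z ≥ f zs
      have hfzge : f zs ≤ f z := by
        have : ∑ y ∈ S, wt y • f y = ∑ y ∈ S, wt y * f zs := by
          apply Finset.sum_congr rfl
          intro y hy
          rcases (hw0 y hy).lt_or_eq with h | h
          · rw [smul_eq_mul, (hpos y hy h).2]
          · rw [← h]; simp
        rw [this, ← Finset.sum_mul, hw1, one_mul] at hfJ
        exact hfJ
      have hpz0 : p z = 0 := by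
        have h1 : t * p z ≤ 0 := by linarith
        have h2 : 0 ≤ p z := hpnn z hzK
        nlinarith
      refine ⟨hzK, le_of_eq hpz0, fun w hw hpw => ?_⟩
      have := hB t ht w hw
      have hpw0 : p w = 0 := le_antisymm hpw (hpnn w hw)
      have hgz' : f z ≤ f zs := by rw [hpz0] at hgz; linarith
      rw [hpw0] at this; linarith
end

section
/- If in the DCA scheme f(x^{k+1}) = f(x^k) (with y^k ∈ ∂h(x^k) and x^{k+1} ∈ argmin{g(x) − ⟨x,y^k⟩}), then x^k is a critical point of g − h, i.e., ∂g(x^k) ∩ ∂h(x^k) ≠ ∅. -/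
open RealInnerProductSpace

/-- If in the DCA scheme the objective value stalls, f(x^{k+1}) = f(x^k), then x^k is a
critical point of g − h: ∂g(x^k) ∩ ∂h(x^k) ≠ ∅. -/
theorem dca_stall_implies_critical
    {E : Type*} [NormedAddCommGroup E] [InnerProductSpace ℝ E]
    (g h : E → ℝ)
    (hg : ConvexOn ℝ Set.univ g) (hh : ConvexOn ℝ Set.univ h)
    (hglsc : LowerSemicontinuous g) (hhlsc : LowerSemicontinuous h)
    (xk yk xk1 : E)
    (hyk : ∀ z, h z ≥ h xk + ⟪z - xk, yk⟫)  -- y^k ∈ ∂h(x^k)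
    (hmin : ∀ z, g xk1 - ⟪xk1, yk⟫ ≤ g z - ⟪z, yk⟫)
    (hstall : g xk1 - h xk1 = g xk - h xk) :
    ∃ w : E, (∀ z, g z ≥ g xk + ⟪z - xk, w⟫) ∧ (∀ z, h z ≥ h xk + ⟪z - xk, w⟫) := by
  refine ⟨yk, fun z => ?_, hyk⟩
  have h1 := hyk xk1
  have h2 := hmin z
  rw [inner_sub_left] at h1 ⊢
  linarith
end
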